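/- Let A, B, A_x, B_x ≥ 0 be real numbers with (√A + √B)(√A_x + √B_x) > 0, let C_B = [(√A−√B)² + (√A_x−√B_x)²] / [2(√A+√B)(√A_x+√B_x)], and let a > 0 with a ≤ C_B. Then for every k ∈ [0,1], setting k₀₀ = k₁₁ = k and k₀₁ = k₁₀ = 1 − k, the quantity −2k₀₀(1−k₀₀)(A+A_x) − 2k₁₁(1−k₁₁)(B+B_x) + 2(|k₁₁(1−k₀₀)| + |k₀₀(1−k₁₁)|)(√(AB) + √(A_xB_x)) + 4a(|1−k₁₁|√B + |1−k₀₀|√A)(|k₀₀|√A_x + |k₁₁|√B_x) is nonpositive. -/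
import Mathlib


/-- For nonnegative `A, B, Ax, Bx` with
`(√A + √B)(√Ax + √Bx) > 0`, with
`C_B = ((√A−√B)² + (√Ax−√Bx)²) / (2(√A+√B)(√Ax+√Bx))` and `0 < a ≤ C_B`,
for every `k ∈ [0,1]`, setting `k₀₀ = k₁₁ = k`, `k₀₁ = k₁₀ = 1 − k`, the quantity
`−2k₀₀(1−k₀₀)(A+Ax) − 2k₁₁(1−k₁₁)(B+Bx)`
`+ 2(|k₁₁(1−k₀₀)| + |k₀₀(1−k₁₁)|)(√(AB) + √(AxBx))`
`+ 4a(|1−k₁₁|√B + |1−k₀₀|√A)(|k₀₀|√Ax + |k₁₁|√Bx)` is nonpositive. -/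
theorem stmt2 (A B Ax Bx a : ℝ)
    (hA : 0 ≤ A) (hB : 0 ≤ B) (hAx : 0 ≤ Ax) (hBx : 0 ≤ Bx)
    (hpos : 0 < (Real.sqrt A + Real.sqrt B) * (Real.sqrt Ax + Real.sqrt Bx))
    (ha : 0 < a)
    (haCB : a ≤ ((Real.sqrt A - Real.sqrt B) ^ 2 + (Real.sqrt Ax - Real.sqrt Bx) ^ 2) /
      (2 * (Real.sqrt A + Real.sqrt B) * (Real.sqrt Ax + Real.sqrt Bx))) :
    ∀ k ∈ Set.Icc (0:ℝ) 1, ∀ k00 k11 k01 k10 : ℝ,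
      k00 = k → k11 = k → k01 = 1 - k → k10 = 1 - k →
      -2 * k00 * (1 - k00) * (A + Ax) - 2 * k11 * (1 - k11) * (B + Bx)
        + 2 * (|k11 * (1 - k00)| + |k00 * (1 - k11)|) * (Real.sqrt (A * B) + Real.sqrt (Ax * Bx))
        + 4 * a * (|1 - k11| * Real.sqrt B + |1 - k00| * Real.sqrt A)
            * (|k00| * Real.sqrt Ax + |k11| * Real.sqrt Bx) ≤ 0 := by
  intro k hk k00 k11 k01 k10 h00 h11 h01 h10
  obtain ⟨hk0, hk1⟩ := hk
  rw [h00, h11]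
  have h1k : 0 ≤ 1 - k := by linarith
  have hkk : 0 ≤ k * (1 - k) := mul_nonneg hk0 h1k
  rw [abs_of_nonneg hkk, abs_of_nonneg h1k, abs_of_nonneg hk0,
    Real.sqrt_mul hA, Real.sqrt_mul hAx]
  have hsA : Real.sqrt A ^ 2 = A := Real.sq_sqrt hA
  have hsB : Real.sqrt B ^ 2 = B := Real.sq_sqrt hB
  have hsAx : Real.sqrt Ax ^ 2 = Ax := Real.sq_sqrt hAx
  have hsBx : Real.sqrt Bx ^ 2 = Bx := Real.sq_sqrt hBx
  have key : 2 * a * ((Real.sqrt A + Real.sqrt B) * (Real.sqrt Ax + Real.sqrt Bx)) ≤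
      (Real.sqrt A - Real.sqrt B) ^ 2 + (Real.sqrt Ax - Real.sqrt Bx) ^ 2 := by
    have hpos2 : 0 < 2 * (Real.sqrt A + Real.sqrt B) * (Real.sqrt Ax + Real.sqrt Bx) := by
      nlinarith
    rw [le_div_iff₀ hpos2] at haCB
    nlinarith [haCB]
  nlinarith [mul_le_mul_of_nonneg_left key hkk]
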